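/- Let n ≥ 1 be an integer, 2 ≤ p ≤ ∞, 2 ≤ q ≤ ∞, and ρ > 0. There is a constant C = C(ρ) < ∞ such that: for any sequence of measurable functions u_j : ℝ×ℝ^n → ℂ (j = 0,1,2,…) satisfying u_j(t,x) = 0 whenever t − j − |x| < −1, and such that the sum u(t,x) = Σ_{j=0}^∞ u_j(t,x) converges absolutely almost everywhere, one has ‖u‖²_{L^p_tL^q_x(ℝ×ℝ^n)} ≤ C Σ_{j=0}^∞ ‖e^{ρ(t−j−|x|)} u_j‖²_{L^p_tL^q_x(ℝ×ℝ^n)}. -/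

import Mathlib

open MeasureTheory Metric Real Set
open scoped ENNReal NNReal

noncomputable section

/-- Euclidean space `ℝⁿ`. -/
abbrev Euc (n : ℕ) := EuclideanSpace ℝ (Fin n)

/-- The Fourier transform with the convention `f̂(ξ) = ∫ e^{-i x·ξ} f(x) dx`. -/
def FT {n : ℕ} (f : Euc n → ℂ) (ξ : Euc n) : ℂ :=
  ∫ x : Euc n, Complex.exp (-(Complex.I * ((inner ℝ x ξ : ℝ) : ℂ))) * f x

/-- Squared inhomogeneous Sobolev norm `‖f‖²_{H^γ} = ∫ (1+|ξ|²)^γ |f̂(ξ)|² dξ`. -/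
def HSq {n : ℕ} (γ : ℝ) (f : Euc n → ℂ) : ℝ≥0∞ :=
  ∫⁻ ξ : Euc n, ENNReal.ofReal ((1 + ‖ξ‖ ^ 2) ^ γ) * (‖FT f ξ‖₊ : ℝ≥0∞) ^ 2

/-- Inhomogeneous Sobolev norm `‖f‖_{H^γ}`. -/
def HNorm {n : ℕ} (γ : ℝ) (f : Euc n → ℂ) : ℝ≥0∞ := HSq γ f ^ (1 / 2 : ℝ)

/-- Squared homogeneous Sobolev norm `‖f‖²_{Ḣ^γ} = ∫ |ξ|^{2γ} |f̂(ξ)|² dξ`. -/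
def HdotSq {n : ℕ} (γ : ℝ) (f : Euc n → ℂ) : ℝ≥0∞ :=
  ∫⁻ ξ : Euc n, ENNReal.ofReal (‖ξ‖ ^ (2 * γ)) * (‖FT f ξ‖₊ : ℝ≥0∞) ^ 2

/-- Homogeneous Sobolev norm `‖f‖_{Ḣ^γ}`. -/
def HdotNorm {n : ℕ} (γ : ℝ) (f : Euc n → ℂ) : ℝ≥0∞ := HdotSq γ f ^ (1 / 2 : ℝ)

/-- `L^r`-norm in time of an `ℝ≥0∞`-valued function (ess-sup if `r = ∞`). -/
def LpT (r : ℝ≥0∞) (g : ℝ → ℝ≥0∞) : ℝ≥0∞ :=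
  if r = ∞ then essSup g volume
  else (∫⁻ t : ℝ, g t ^ r.toReal) ^ (1 / r.toReal)

/-- Mixed norm `‖F‖_{L^r_t L^s_x(ℝ×ℝⁿ)}`. -/
def mixedNorm {n : ℕ} (r s : ℝ≥0∞) (F : ℝ → Euc n → ℂ) : ℝ≥0∞ :=
  LpT r fun t => eLpNorm (F t) s volume

/-- Restriction of a space-time function to a set `A`, extended by zero. -/
def restr {n : ℕ} (A : Set (ℝ × Euc n)) (F : ℝ → Euc n → ℂ) : ℝ → Euc n → ℂ :=
  fun t x => A.indicator (fun p : ℝ × Euc n => F p.1 p.2) (t, x)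

/-- The Laplace–Beltrami operator
`Δ_g u = (det g)^{-1/2} ∂_i ((det g)^{1/2} g^{ij} ∂_j u)` of a Riemannian metric `g`. -/
def LaplaceBeltrami {n : ℕ} (g : Euc n → Matrix (Fin n) (Fin n) ℝ) (u : Euc n → ℂ)
    (x : Euc n) : ℂ :=
  (Real.sqrt ((g x).det))⁻¹ •
    ∑ i : Fin n, fderiv ℝ
      (fun y => Real.sqrt ((g y).det) •
        ∑ j : Fin n, ((g y)⁻¹ i j) • fderiv ℝ u y (EuclideanSpace.single j 1)) x
      (EuclideanSpace.single i 1)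

/-- The Euclidean Laplacian `Δu = ∑ ∂²u/∂x_i²`. -/
def EucLap {n : ℕ} (u : Euc n → ℂ) (x : Euc n) : ℂ :=
  ∑ i : Fin n, fderiv ℝ (fun y => fderiv ℝ u y (EuclideanSpace.single i 1)) x
    (EuclideanSpace.single i 1)

/-- Time derivative `∂_t u` of a space-time function. -/
def dt {n : ℕ} (u : ℝ → Euc n → ℂ) : ℝ → Euc n → ℂ :=
  fun t x => deriv (fun τ => u τ x) t

/-- Spatial partial derivative `∂_{x_i} u`. -/
def dxi {n : ℕ} (i : Fin n) (u : Euc n → ℂ) (x : Euc n) : ℂ :=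
  fderiv ℝ u x (EuclideanSpace.single i 1)

/-- The surface measure on the unit sphere `S^{n-1} ⊆ ℝⁿ`. -/
def sphereMeasure (n : ℕ) : Measure (sphere (0 : Euc n) 1) :=
  (volume : Measure (Euc n)).toSphere

/-- The half-wave propagator `e^{it|D|}`. -/
def halfWave {n : ℕ} (t : ℝ) (f : Euc n → ℂ) (x : Euc n) : ℂ :=
  ((2 * π) ^ n)⁻¹ •
    ∫ ξ : Euc n, Complex.exp (Complex.I * ((inner ℝ x ξ : ℝ) : ℂ)) *
      Complex.exp (Complex.I * (t : ℂ) * (‖ξ‖ : ℂ)) * FT f ξ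

/-- The solution of the free wave equation with Cauchy data `f, g`, given by the
Fourier formula `u(t,x) = (2π)^{-n} ∫ e^{ix·ξ}(cos(t|ξ|) f̂(ξ) + sin(t|ξ|)/|ξ| ĝ(ξ)) dξ`. -/
def waveSol {n : ℕ} (f g : Euc n → ℂ) (t : ℝ) (x : Euc n) : ℂ :=
  ((2 * π) ^ n)⁻¹ •
    ∫ ξ : Euc n, Complex.exp (Complex.I * ((inner ℝ x ξ : ℝ) : ℂ)) *
      (Complex.cos ((t : ℂ) * (‖ξ‖ : ℂ)) * FT f ξ +
        (Complex.sin ((t : ℂ) * (‖ξ‖ : ℂ)) / (‖ξ‖ : ℂ)) * FT g ξ)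

namespace AOS

open Filter Topology

/-- General `L^r` functional for `ℝ≥0∞`-valued functions, matching `LpT` and `eLpNorm`. -/
def eN {α : Type*} [MeasurableSpace α] (μ : Measure α) (r : ℝ≥0∞) (h : α → ℝ≥0∞) : ℝ≥0∞ :=
  if r = ∞ then essSup h μ else (∫⁻ a, h a ^ r.toReal ∂μ) ^ (1 / r.toReal)

lemma LpT_eq_eN (r : ℝ≥0∞) (g : ℝ → ℝ≥0∞) : LpT r g = eN volume r g := rfl

lemma eN_nnnorm {α : Type*} [MeasurableSpace α] (μ : Measure α) {s : ℝ≥0∞} (hs : s ≠ 0)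
    (g : α → ℂ) : eN μ s (fun x => (‖g x‖₊ : ℝ≥0∞)) = eLpNorm g s μ := by
  by_cases h : s = ∞
  · simp [eN, h, eLpNorm_exponent_top, eLpNormEssSup]; rfl
  · rw [eN, if_neg h, eLpNorm_eq_lintegral_rpow_enorm_toReal hs h]; rfl

lemma sq_rpow (x : ℝ≥0∞) (y : ℝ) : (x ^ (2 : ℕ)) ^ y = x ^ (2 * y) := by
  rw [← ENNReal.rpow_natCast x 2, ← ENNReal.rpow_mul]
  norm_num

lemma rpow_sq (x : ℝ≥0∞) (y : ℝ) : (x ^ y) ^ (2 : ℕ) = x ^ (y * 2) := by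
  rw [← ENNReal.rpow_natCast (x ^ y) 2, ← ENNReal.rpow_mul]
  norm_num

lemma rpow_inv_self (x : ℝ≥0∞) {e : ℝ} (he : e ≠ 0) : (x ^ (1 / e)) ^ e = x := by
  rw [← ENNReal.rpow_mul, one_div, inv_mul_cancel₀ he, ENNReal.rpow_one]

/-- Cauchy–Schwarz for sums of extended nonnegative reals. -/
lemma cs_tsum (f g : ℕ → ℝ≥0∞) :
    (∑' j, f j * g j) ^ 2 ≤ (∑' j, f j ^ 2) * (∑' j, g j ^ 2) := by
  have hconj : Real.HolderConjugate 2 2 := Real.HolderConjugate.two_two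
  have h := ENNReal.lintegral_mul_le_Lp_mul_Lq (Measure.count : Measure ℕ) hconj
    (measurable_of_countable f).aemeasurable (measurable_of_countable g).aemeasurable
  rw [MeasureTheory.lintegral_count, MeasureTheory.lintegral_count,
    MeasureTheory.lintegral_count] at h
  have h2 : ∀ x : ℝ≥0∞, x ^ (2 : ℝ) = x ^ (2 : ℕ) := fun x => by
    rw [← ENNReal.rpow_natCast x 2]; norm_num
  simp only [Pi.mul_apply, h2] at h
  calc (∑' j, f j * g j) ^ 2
      ≤ ((∑' j, f j ^ 2) ^ (1 / 2 : ℝ) * (∑' j, g j ^ 2) ^ (1 / 2 : ℝ)) ^ 2 :=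
        pow_le_pow_left' h 2
    _ = (∑' j, f j ^ 2) * (∑' j, g j ^ 2) := by
        rw [mul_pow, rpow_sq, rpow_sq]
        norm_num

/-- Summing the exponential weights: a geometric series bound. -/
lemma weight_sum {ρ : ℝ} (hρ : 0 < ρ) (c : ℝ) :
    (∑' j : ℕ, (if c - j < -1 then 0
        else ENNReal.ofReal (Real.exp (-(ρ * (c - j))))) ^ 2)
      ≤ ENNReal.ofReal (Real.exp (2 * ρ)) *
          (1 - ENNReal.ofReal (Real.exp (-(2 * ρ))))⁻¹ := by
  set r : ℝ≥0∞ := ENNReal.ofReal (Real.exp (-(2 * ρ))) with hr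
  by_cases hc : c + 1 < 0
  · have hz : ∀ j : ℕ, (if c - j < -1 then 0
        else ENNReal.ofReal (Real.exp (-(ρ * (c - j))))) ^ 2 = 0 := by
      intro j
      have : c - j < -1 := by
        have : (0 : ℝ) ≤ j := Nat.cast_nonneg j
        linarith
      simp [this]
    simp only [hz, tsum_zero]
    exact zero_le
  · push_neg at hc
    set m : ℕ := ⌊c + 1⌋₊ with hm
    have hmle : (m : ℝ) ≤ c + 1 := Nat.floor_le hc
    have hbound : ∀ j : ℕ, (if c - j < -1 then 0
        else ENNReal.ofReal (Real.exp (-(ρ * (c - j))))) ^ 2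
        ≤ (if j ≤ m then ENNReal.ofReal (Real.exp (2 * ρ)) * r ^ (m - j) else 0) := by
      intro j
      by_cases hjm : j ≤ m
      · rw [if_pos hjm]
        by_cases hj : c - j < -1
        · rw [if_pos hj]
          simpa using zero_le _
        · rw [if_neg hj]
          have hcast : ((m - j : ℕ) : ℝ) = (m : ℝ) - j := by
            rw [Nat.cast_sub hjm]
          have hreal : Real.exp (-(ρ * (c - j))) ^ 2
              ≤ Real.exp (2 * ρ) * Real.exp (-(2 * ρ)) ^ (m - j) := by
            rw [← Real.exp_nat_mul, ← Real.exp_nat_mul, ← Real.exp_add, hcast]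
            apply Real.exp_le_exp.2
            push_cast
            nlinarith [mul_le_mul_of_nonneg_left (show (m:ℝ) - j ≤ c - j + 1 by linarith)
              (show (0:ℝ) ≤ 2*ρ by linarith)]
          calc (ENNReal.ofReal (Real.exp (-(ρ * (c - j))))) ^ 2
              = ENNReal.ofReal (Real.exp (-(ρ * (c - j))) ^ 2) := by
                rw [ENNReal.ofReal_pow (Real.exp_nonneg _)]
            _ ≤ ENNReal.ofReal (Real.exp (2 * ρ) * Real.exp (-(2 * ρ)) ^ (m - j)) :=
                ENNReal.ofReal_le_ofReal hreal
            _ = ENNReal.ofReal (Real.exp (2 * ρ)) * r ^ (m - j) := by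
                rw [ENNReal.ofReal_mul (Real.exp_nonneg _),
                  ENNReal.ofReal_pow (Real.exp_nonneg _)]
      · rw [if_neg hjm]
        have hj : c - j < -1 := by
          have : c + 1 < j := (Nat.floor_lt hc).1 (Nat.lt_of_not_le hjm)
          linarith
        simp [hj]
    calc (∑' j : ℕ, (if c - j < -1 then 0
            else ENNReal.ofReal (Real.exp (-(ρ * (c - j))))) ^ 2)
        ≤ ∑' j : ℕ, (if j ≤ m then ENNReal.ofReal (Real.exp (2 * ρ)) * r ^ (m - j) else 0) :=
          ENNReal.tsum_le_tsum hbound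
      _ = ∑ j ∈ Finset.range (m + 1),
            (if j ≤ m then ENNReal.ofReal (Real.exp (2 * ρ)) * r ^ (m - j) else 0) := by
          refine tsum_eq_sum ?_
          intro j hj
          rw [Finset.mem_range, Nat.lt_succ_iff] at hj
          rw [if_neg hj]
      _ = ∑ j ∈ Finset.range (m + 1), ENNReal.ofReal (Real.exp (2 * ρ)) * r ^ (m - j) := by
          refine Finset.sum_congr rfl fun j hj => ?_
          rw [Finset.mem_range, Nat.lt_succ_iff] at hj
          rw [if_pos hj]
      _ = ENNReal.ofReal (Real.exp (2 * ρ)) * ∑ j ∈ Finset.range (m + 1), r ^ (m - j) := by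
          rw [Finset.mul_sum]
      _ = ENNReal.ofReal (Real.exp (2 * ρ)) * ∑ j ∈ Finset.range (m + 1), r ^ j := by
          congr 1
          have := Finset.sum_range_reflect (fun j => r ^ j) (m + 1)
          simpa using this
      _ ≤ ENNReal.ofReal (Real.exp (2 * ρ)) * ∑' j : ℕ, r ^ j :=
          mul_le_mul_right (ENNReal.sum_le_tsum _) _
      _ = ENNReal.ofReal (Real.exp (2 * ρ)) * (1 - r)⁻¹ := by
          rw [ENNReal.tsum_geometric]

/-- Minkowski's inequality for a countable sum. -/
lemma lintegral_tsum_rpow {α : Type*} [MeasurableSpace α] (μ : Measure α) {e : ℝ}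
    (he : 1 ≤ e) (H : ℕ → α → ℝ≥0∞) (hH : ∀ j, Measurable (H j)) :
    (∫⁻ a, (∑' j, H j a) ^ e ∂μ) ^ (1 / e) ≤ ∑' j, (∫⁻ a, H j a ^ e ∂μ) ^ (1 / e) := by
  have he0 : 0 < e := lt_of_lt_of_le zero_lt_one he
  -- finite version
  have hfin : ∀ s : Finset ℕ,
      (∫⁻ a, (∑ j ∈ s, H j a) ^ e ∂μ) ^ (1 / e) ≤ ∑ j ∈ s, (∫⁻ a, H j a ^ e ∂μ) ^ (1 / e) := by
    intro s
    induction s using Finset.induction_on with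
    | empty =>
      have h0 : ∀ a : α, (∑ j ∈ (∅ : Finset ℕ), H j a) ^ e = 0 := fun a => by
        simp [ENNReal.zero_rpow_of_pos he0]
      simp_rw [h0]
      rw [lintegral_zero, ENNReal.zero_rpow_of_pos (show (0:ℝ) < 1/e by positivity)]
      simp
    | insert i s' hx ih =>
      have hsum : Measurable fun a => ∑ j ∈ s', H j a :=
        Finset.measurable_sum s' fun j _ => hH j
      have h2 := ENNReal.lintegral_Lp_add_le (μ := μ) (hH i).aemeasurable
        hsum.aemeasurable he
      rw [Finset.sum_insert hx]
      calc (∫⁻ a, (∑ j ∈ insert i s', H j a) ^ e ∂μ) ^ (1 / e)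
          = (∫⁻ a, ((H i + fun a => ∑ j ∈ s', H j a) a) ^ e ∂μ) ^ (1 / e) := by
            congr 1
            refine lintegral_congr fun a => ?_
            rw [Finset.sum_insert hx]
            simp only [Pi.add_apply]
        _ ≤ (∫⁻ a, H i a ^ e ∂μ) ^ (1 / e) + (∫⁻ a, (∑ j ∈ s', H j a) ^ e ∂μ) ^ (1 / e) := h2
        _ ≤ _ := add_le_add_right ih _
  -- pass to the limit
  have hpt : ∀ a, (∑' j, H j a) ^ e = ⨆ k, (∑ j ∈ Finset.range k, H j a) ^ e := by
    intro a
    have h1 : Tendsto (fun k => ∑ j ∈ Finset.range k, H j a) atTop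
        (𝓝 (∑' j, H j a)) := by
      rw [ENNReal.tsum_eq_iSup_nat]
      exact tendsto_atTop_iSup fun k l hkl =>
        Finset.sum_le_sum_of_subset (Finset.range_subset_range.2 hkl)
    have h2 : Tendsto (fun k => (∑ j ∈ Finset.range k, H j a) ^ e) atTop
        (𝓝 ((∑' j, H j a) ^ e)) :=
      (ENNReal.continuous_rpow_const.tendsto _).comp h1
    have h3 : Tendsto (fun k => (∑ j ∈ Finset.range k, H j a) ^ e) atTop
        (𝓝 (⨆ k, (∑ j ∈ Finset.range k, H j a) ^ e)) :=
      tendsto_atTop_iSup fun k l hkl =>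
        ENNReal.rpow_le_rpow (Finset.sum_le_sum_of_subset (Finset.range_subset_range.2 hkl)) he0.le
    exact tendsto_nhds_unique h2 h3
  have hint : (∫⁻ a, (∑' j, H j a) ^ e ∂μ)
      = ⨆ k, ∫⁻ a, (∑ j ∈ Finset.range k, H j a) ^ e ∂μ := by
    simp_rw [hpt]
    exact lintegral_iSup
      (fun k => ENNReal.continuous_rpow_const.measurable.comp
        (Finset.measurable_sum _ fun j _ => hH j))
      (fun k l hkl a => ENNReal.rpow_le_rpow
        (Finset.sum_le_sum_of_subset (Finset.range_subset_range.2 hkl)) he0.le)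
  rw [hint]
  have hsup : (⨆ k, ∫⁻ a, (∑ j ∈ Finset.range k, H j a) ^ e ∂μ)
      ≤ (∑' j, (∫⁻ a, H j a ^ e ∂μ) ^ (1 / e)) ^ e := by
    refine iSup_le fun k => ?_
    have h1 := hfin (Finset.range k)
    have h2 : (∑ j ∈ Finset.range k, (∫⁻ a, H j a ^ e ∂μ) ^ (1 / e))
        ≤ ∑' j, (∫⁻ a, H j a ^ e ∂μ) ^ (1 / e) := ENNReal.sum_le_tsum _
    have h3 := (h1.trans h2)
    have h4 := ENNReal.rpow_le_rpow h3 he0.le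
    rwa [rpow_inv_self _ he0.ne'] at h4
  calc (⨆ k, ∫⁻ a, (∑ j ∈ Finset.range k, H j a) ^ e ∂μ) ^ (1 / e)
      ≤ ((∑' j, (∫⁻ a, H j a ^ e ∂μ) ^ (1 / e)) ^ e) ^ (1 / e) :=
        ENNReal.rpow_le_rpow hsup (by positivity)
    _ = ∑' j, (∫⁻ a, H j a ^ e ∂μ) ^ (1 / e) := by
        rw [← ENNReal.rpow_mul, mul_one_div, div_self he0.ne', ENNReal.rpow_one]

/-- The key square-function estimate for the generalized `L^r` functional. -/
lemma key {α : Type*} [MeasurableSpace α] (μ : Measure α) (r : ℝ≥0∞) (hr : 2 ≤ r)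
    (C : ℝ≥0∞) (hC : C ≠ ∞) (f : α → ℝ≥0∞) (G : ℕ → α → ℝ≥0∞)
    (hG : ∀ j, Measurable (G j)) (hle : ∀ a, f a ^ 2 ≤ C * ∑' j, G j a ^ 2) :
    eN μ r f ^ 2 ≤ C * ∑' j, eN μ r (G j) ^ 2 := by
  by_cases hrtop : r = ∞
  · subst hrtop
    simp only [eN, if_pos rfl]
    set M : ℝ≥0∞ := ∑' j, essSup (G j) μ ^ 2 with hM
    have h1 : ∀ᵐ a ∂μ, ∀ j, G j a ≤ essSup (G j) μ :=
      ae_all_iff.2 fun j => ENNReal.ae_le_essSup (G j)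
    have h2 : ∀ᵐ a ∂μ, f a ≤ (C * M) ^ (1 / 2 : ℝ) := by
      filter_upwards [h1] with a ha
      have hfa : f a ^ 2 ≤ C * M := by
        refine (hle a).trans (mul_le_mul_right (ENNReal.tsum_le_tsum fun j => ?_) C)
        exact pow_le_pow_left' (ha j) 2
      calc f a = (f a ^ 2) ^ (1 / 2 : ℝ) := by rw [sq_rpow]; norm_num
        _ ≤ (C * M) ^ (1 / 2 : ℝ) := ENNReal.rpow_le_rpow hfa (by norm_num)
    have h3 : essSup f μ ≤ (C * M) ^ (1 / 2 : ℝ) := essSup_le_of_ae_le _ h2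
    calc essSup f μ ^ 2 ≤ ((C * M) ^ (1 / 2 : ℝ)) ^ 2 := pow_le_pow_left' h3 2
      _ = C * M := by rw [rpow_sq]; norm_num
  · have hrT2 : (2 : ℝ) ≤ r.toReal := by
      have h := (ENNReal.toReal_le_toReal (by norm_num) hrtop).2 hr
      simpa using h
    set rT : ℝ := r.toReal with hrT
    have hrTpos : 0 < rT := by linarith
    set e : ℝ := rT / 2 with hee
    have he1 : 1 ≤ e := by rw [hee]; linarith
    have he0 : 0 < e := lt_of_lt_of_le zero_lt_one he1
    have h1e : (1 : ℝ) / e = 1 / rT * 2 := by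
      rw [hee, one_div_div]; ring
    simp only [eN, if_neg hrtop, ← hrT]
    set M : ℝ≥0∞ := ∑' j, ((∫⁻ a, G j a ^ rT ∂μ) ^ (1 / rT)) ^ 2 with hM
    -- Minkowski step
    have hmink : (∫⁻ a, (∑' j, G j a ^ 2) ^ e ∂μ) ≤ M ^ e := by
      have h1 := lintegral_tsum_rpow μ he1 (fun j a => G j a ^ 2)
        (fun j => (hG j).pow_const 2)
      have h2 : ∀ j, (∫⁻ a, (G j a ^ 2) ^ e ∂μ) ^ (1 / e)
          = ((∫⁻ a, G j a ^ rT ∂μ) ^ (1 / rT)) ^ 2 := by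
        intro j
        have hpt : ∀ a : α, (G j a ^ 2) ^ e = G j a ^ rT := by
          intro a
          rw [sq_rpow]
          congr 1
          rw [hee]; ring
        simp_rw [hpt]
        rw [rpow_sq, h1e]
      rw [show M = ∑' j, (∫⁻ a, (G j a ^ 2) ^ e ∂μ) ^ (1 / e) by
        rw [hM]; exact (tsum_congr fun j => (h2 j)).symm]
      have h3 := ENNReal.rpow_le_rpow h1 he0.le
      rwa [rpow_inv_self _ he0.ne'] at h3
    -- pointwise step
    have hfb : ∀ a, f a ^ rT ≤ C ^ e * (∑' j, G j a ^ 2) ^ e := by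
      intro a
      calc f a ^ rT = (f a ^ 2) ^ e := by rw [sq_rpow]; congr 1; rw [hee]; ring
        _ ≤ (C * ∑' j, G j a ^ 2) ^ e := ENNReal.rpow_le_rpow (hle a) he0.le
        _ = C ^ e * (∑' j, G j a ^ 2) ^ e := ENNReal.mul_rpow_of_nonneg _ _ he0.le
    have hint : (∫⁻ a, f a ^ rT ∂μ) ≤ C ^ e * M ^ e := by
      calc (∫⁻ a, f a ^ rT ∂μ) ≤ ∫⁻ a, C ^ e * (∑' j, G j a ^ 2) ^ e ∂μ := lintegral_mono hfb
        _ = C ^ e * ∫⁻ a, (∑' j, G j a ^ 2) ^ e ∂μ :=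
          lintegral_const_mul' _ _ (ENNReal.rpow_ne_top_of_nonneg he0.le hC)
        _ ≤ C ^ e * M ^ e := mul_le_mul_right hmink _
    calc ((∫⁻ a, f a ^ rT ∂μ) ^ (1 / rT)) ^ 2
        = (∫⁻ a, f a ^ rT ∂μ) ^ (1 / e) := by
          rw [rpow_sq, h1e]
      _ ≤ (C ^ e * M ^ e) ^ (1 / e) := ENNReal.rpow_le_rpow hint (by positivity)
      _ = C * M := by
          rw [ENNReal.mul_rpow_of_nonneg _ _ (by positivity), ← ENNReal.rpow_mul,
            ← ENNReal.rpow_mul, mul_one_div, div_self he0.ne', ENNReal.rpow_one,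
            ENNReal.rpow_one]

/-- Measurability in `t` of `t ↦ ‖F t‖_{L^s_x}`. -/
lemma meas_eLpNorm {α β : Type*} [MeasurableSpace α] [MeasurableSpace β] (μ : Measure β)
    [SFinite μ] (s : ℝ≥0∞) {F : α → β → ℂ}
    (hF : Measurable fun p : α × β => F p.1 p.2) :
    Measurable fun t => eLpNorm (F t) s μ := by
  by_cases hs0 : s = 0
  · simp [hs0, eLpNorm_exponent_zero, measurable_const]
  by_cases hstop : s = ∞
  · subst hstop
    simp only [eLpNorm_exponent_top, eLpNormEssSup]
    apply measurable_of_Iic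
    intro cc
    have hset : MeasurableSet {pp : α × β | cc < (‖F pp.1 pp.2‖₊ : ℝ≥0∞)} :=
      measurableSet_lt measurable_const hF.nnnorm.coe_nnreal_ennreal
    have hψ : Measurable fun t => μ (Prod.mk t ⁻¹' {pp : α × β | cc < (‖F pp.1 pp.2‖₊ : ℝ≥0∞)}) :=
      measurable_measure_prodMk_left hset
    have hseteq : (fun t => essSup (fun x => (‖F t x‖₊ : ℝ≥0∞)) μ) ⁻¹' Iic cc
        = (fun t => μ (Prod.mk t ⁻¹' {pp : α × β | cc < (‖F pp.1 pp.2‖₊ : ℝ≥0∞)})) ⁻¹' {0} := by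
      ext t
      simp only [Set.mem_preimage, Set.mem_Iic, Set.mem_singleton_iff]
      constructor
      · intro h
        have hae : ∀ᵐ x ∂μ, (‖F t x‖₊ : ℝ≥0∞) ≤ cc := by
          filter_upwards [ENNReal.ae_le_essSup fun x => (‖F t x‖₊ : ℝ≥0∞)] with x hx
          exact hx.trans h
        have heq2 : Prod.mk t ⁻¹' {pp : α × β | cc < (‖F pp.1 pp.2‖₊ : ℝ≥0∞)}
            = {x : β | ¬ ((‖F t x‖₊ : ℝ≥0∞) ≤ cc)} := by
          ext x; simp [not_le]
        rw [heq2, ← ae_iff]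
        exact hae
      · intro h
        refine essSup_le_of_ae_le _ ?_
        have heq2 : Prod.mk t ⁻¹' {pp : α × β | cc < (‖F pp.1 pp.2‖₊ : ℝ≥0∞)}
            = {x : β | ¬ ((‖F t x‖₊ : ℝ≥0∞) ≤ cc)} := by
          ext x; simp [not_le]
        rw [heq2, ← ae_iff] at h
        exact h
    show MeasurableSet ((fun t => essSup (fun x => (‖F t x‖₊ : ℝ≥0∞)) μ) ⁻¹' Iic cc); rw [hseteq]
    exact hψ (measurableSet_singleton 0)
  · have heq : ∀ t, eLpNorm (F t) s μ
        = (∫⁻ x, (‖F t x‖₊ : ℝ≥0∞) ^ s.toReal ∂μ) ^ (1 / s.toReal) :=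
      fun t => eLpNorm_eq_lintegral_rpow_enorm_toReal hs0 hstop
    simp_rw [heq]
    exact ENNReal.continuous_rpow_const.measurable.comp
      (Measurable.lintegral_prod_right'
        (f := fun pp : α × β => (‖F pp.1 pp.2‖₊ : ℝ≥0∞) ^ s.toReal)
        (ENNReal.continuous_rpow_const.measurable.comp hF.nnnorm.coe_nnreal_ennreal))

end AOS

/-- The almost-orthogonality summation step at the end of the proof of Theorem 1.1 of
Smith–Sogge: if each `u_j` is supported in `{t - j - |x| ≥ -1}` and `p, q ≥ 2`, then
`‖Σ_j u_j‖²_{L^p_tL^q_x} ≤ C Σ_j ‖e^{ρ(t-j-|x|)} u_j‖²_{L^p_tL^q_x}`. -/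
theorem almost_orthogonal_sum
    {n : ℕ} (hn : 1 ≤ n) {p q : ℝ≥0∞}
    (hp2 : 2 ≤ p) (hq2 : 2 ≤ q) {ρ : ℝ} (hρ : 0 < ρ) :
    ∃ C : ℝ≥0∞, C < ∞ ∧ ∀ u : ℕ → ℝ → Euc n → ℂ,
      (∀ j, Measurable (fun tx : ℝ × Euc n => u j tx.1 tx.2)) →
      (∀ (j : ℕ) (t : ℝ) (x : Euc n), t - j - ‖x‖ < -1 → u j t x = 0) →
      (∀ᵐ tx : ℝ × Euc n, Summable fun j => ‖u j tx.1 tx.2‖) →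
      mixedNorm p q (fun t x => ∑' j : ℕ, u j t x) ^ 2
        ≤ C * ∑' j : ℕ,
            mixedNorm p q (fun t x => Real.exp (ρ * (t - j - ‖x‖)) • u j t x) ^ 2 := by
  classical
  set A : ℝ≥0∞ := ENNReal.ofReal (Real.exp (2 * ρ)) *
      (1 - ENNReal.ofReal (Real.exp (-(2 * ρ))))⁻¹ with hA
  have hr1 : ENNReal.ofReal (Real.exp (-(2 * ρ))) < 1 := by
    rw [← ENNReal.ofReal_one]
    exact (ENNReal.ofReal_lt_ofReal_iff (by norm_num)).2
      (Real.exp_lt_one_iff.2 (by linarith))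
  have hAfin : A < ∞ := by
    rw [hA]
    exact ENNReal.mul_lt_top ENNReal.ofReal_lt_top
      (ENNReal.inv_lt_top.2 (tsub_pos_iff_lt.2 hr1))
  refine ⟨A, hAfin, ?_⟩
  intro u hmeas hsupp _
  have hAne : A ≠ ∞ := hAfin.ne
  have hq0 : q ≠ 0 := by rintro rfl; exact absurd hq2 (by simp)
  set v : ℕ → ℝ → Euc n → ℂ := fun j t x => Real.exp (ρ * (t - j - ‖x‖)) • u j t x with hv
  have hvmeas : ∀ j, Measurable fun tx : ℝ × Euc n => v j tx.1 tx.2 := by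
    intro j
    have hc : Continuous fun tx : ℝ × Euc n => Real.exp (ρ * (tx.1 - j - ‖tx.2‖)) := by
      fun_prop
    have hrw : (fun tx : ℝ × Euc n => v j tx.1 tx.2)
        = fun tx => (Real.exp (ρ * (tx.1 - j - ‖tx.2‖)) : ℂ) * u j tx.1 tx.2 := by
      funext tx
      simp only [hv, Complex.real_smul]
    rw [hrw]
    exact (Complex.measurable_ofReal.comp hc.measurable).mul (hmeas j)
  have hvsec : ∀ (j : ℕ) (t : ℝ), Measurable fun x : Euc n => (‖v j t x‖₊ : ℝ≥0∞) :=
    fun j t => (((hvmeas j).comp measurable_prodMk_left).nnnorm).coe_nnreal_ennreal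
  -- the pointwise square-function bound
  have hpt : ∀ (t : ℝ) (x : Euc n),
      (‖∑' j, u j t x‖₊ : ℝ≥0∞) ^ 2 ≤ A * ∑' j, (‖v j t x‖₊ : ℝ≥0∞) ^ 2 := by
    intro t x
    have harg : ∀ j : ℕ, t - j - ‖x‖ = (t - ‖x‖) - j := fun j => by ring
    set c : ℝ := t - ‖x‖ with hc
    set wh : ℕ → ℝ≥0∞ := fun j => if c - j < -1 then 0
      else ENNReal.ofReal (Real.exp (-(ρ * (c - j)))) with hwh
    have step1 : ∀ j, (‖u j t x‖₊ : ℝ≥0∞) ≤ wh j * (‖v j t x‖₊ : ℝ≥0∞) := by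
      intro j
      by_cases hj : c - j < -1
      · have h0 : u j t x = 0 := hsupp j t x (by rw [harg j]; exact hj)
        simp [h0]
      · have hvx : (‖v j t x‖₊ : ℝ≥0∞)
            = ENNReal.ofReal (Real.exp (ρ * (c - j))) * (‖u j t x‖₊ : ℝ≥0∞) := by
          simp only [hv]
          rw [nnnorm_smul, ENNReal.coe_mul, ← enorm_eq_nnnorm (Real.exp _), Real.enorm_eq_ofReal (Real.exp_nonneg _),
            harg j]
        rw [hwh]
        simp only [if_neg hj]
        rw [hvx, ← mul_assoc, ← ENNReal.ofReal_mul (Real.exp_nonneg _), ← Real.exp_add,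
          (by ring : -(ρ * (c - (j : ℝ))) + ρ * (c - (j : ℝ)) = 0), Real.exp_zero,
          ENNReal.ofReal_one, one_mul]
    have step0 : (‖∑' j, u j t x‖₊ : ℝ≥0∞) ≤ ∑' j, (‖u j t x‖₊ : ℝ≥0∞) := by
      by_cases hsum : Summable fun j => ‖u j t x‖
      · calc (‖∑' j, u j t x‖₊ : ℝ≥0∞) = ENNReal.ofReal ‖∑' j, u j t x‖ :=
            (ofReal_norm_eq_enorm _).symm
          _ ≤ ENNReal.ofReal (∑' j, ‖u j t x‖) :=
            ENNReal.ofReal_le_ofReal (norm_tsum_le_tsum_norm hsum)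
          _ = ∑' j, ENNReal.ofReal ‖u j t x‖ :=
            ENNReal.ofReal_tsum_of_nonneg (fun j => norm_nonneg _) hsum
          _ = ∑' j, (‖u j t x‖₊ : ℝ≥0∞) :=
            tsum_congr fun j => ofReal_norm_eq_enorm _
      · have hz : (∑' j, u j t x) = 0 :=
          tsum_eq_zero_of_not_summable fun h => hsum h.norm
        simp [hz]
    calc (‖∑' j, u j t x‖₊ : ℝ≥0∞) ^ 2
        ≤ (∑' j, (‖u j t x‖₊ : ℝ≥0∞)) ^ 2 := pow_le_pow_left' step0 2
      _ ≤ (∑' j, wh j * (‖v j t x‖₊ : ℝ≥0∞)) ^ 2 :=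
          pow_le_pow_left' (ENNReal.tsum_le_tsum step1) 2
      _ ≤ (∑' j, wh j ^ 2) * (∑' j, (‖v j t x‖₊ : ℝ≥0∞) ^ 2) := AOS.cs_tsum _ _
      _ ≤ A * ∑' j, (‖v j t x‖₊ : ℝ≥0∞) ^ 2 := by
          refine mul_le_mul_left ?_ _
          rw [hwh, hA]
          exact AOS.weight_sum hρ c
  -- spatial step
  have hsp : ∀ t : ℝ, eLpNorm (fun x => ∑' j, u j t x) q volume ^ 2
      ≤ A * ∑' j, eLpNorm (v j t) q volume ^ 2 := by
    intro t
    have hk := AOS.key volume q hq2 A hAne (fun x => (‖∑' j, u j t x‖₊ : ℝ≥0∞))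
      (fun j x => (‖v j t x‖₊ : ℝ≥0∞)) (fun j => hvsec j t) (fun x => hpt t x)
    simp_rw [AOS.eN_nnnorm volume hq0] at hk
    exact hk
  -- temporal step
  have hGmeas : ∀ j, Measurable fun t => eLpNorm (v j t) q volume :=
    fun j => AOS.meas_eLpNorm volume q (hvmeas j)
  have htm := AOS.key volume p hp2 A hAne
    (fun t => eLpNorm (fun x => ∑' j, u j t x) q volume)
    (fun j t => eLpNorm (v j t) q volume) hGmeas hsp
  simp only [mixedNorm, AOS.LpT_eq_eN]
  exact htm
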